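/- If λ_q > 0 and G admits an α-realizable q-partition for some α ∈ [0,1), then λ_{q−1}/λ_q ≤ α/√(1−α²). -/

import Mathlib

open Matrix

/-- The weighted degree matrix of `A`. -/
noncomputable def degMat {n : ℕ} (A : Matrix (Fin n) (Fin n) ℝ) :
    Matrix (Fin n) (Fin n) ℝ :=
  Matrix.diagonal (fun k => ∑ l, A k l)

/-- The graph Laplacian `L = D - A`. -/
noncomputable def lap {n : ℕ} (A : Matrix (Fin n) (Fin n) ℝ) :
    Matrix (Fin n) (Fin n) ℝ :=
  degMat A - A

/-- The relative outgoing weight of the part `V j`. -/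
noncomputable def relout {n q : ℕ} (A : Matrix (Fin n) (Fin n) ℝ)
    (V : Fin q → Finset (Fin n)) (j : Fin q) : ℝ :=
  (Real.sqrt ((V j).card))⁻¹ * ∑ k ∈ V j, ∑ l ∈ (V j)ᶜ, A k l

/-- The average relative outgoing weight of a `q`-partition. -/
noncomputable def avgrelout {n q : ℕ} (A : Matrix (Fin n) (Fin n) ℝ)
    (V : Fin q → Finset (Fin n)) : ℝ :=
  Real.sqrt ((1 / (q : ℝ)) * ∑ j : Fin q, (relout A V j) ^ 2)

set_option maxHeartbeats 2000000 in
/-- if `λ_q > 0` and `G` admits an α-realizable q-partition with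
`α ∈ [0,1)`, then `λ_{q−1}/λ_q ≤ α/√(1−α²)`. -/
theorem stmt_3 (n q : ℕ) (hq1 : 1 ≤ q) (hqn : q < n)
    (A : Matrix (Fin n) (Fin n) ℝ)
    (hsymm : ∀ k l, A k l = A l k)
    (hnonneg : ∀ k l, 0 ≤ A k l)
    (hdiag : ∀ k, A k k = 0)
    (lam : Fin n → ℝ)
    (hmono : Monotone lam)
    (hlam0 : lam ⟨0, Nat.lt_of_le_of_lt (Nat.zero_le q) hqn⟩ = 0)
    (u : Fin n → Fin n → ℝ)
    (horth : ∀ i j : Fin n, (∑ a, u i a * u j a) = if i = j then (1 : ℝ) else 0)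
    (heig : ∀ i : Fin n, (lap A).mulVec (u i) = lam i • u i)
    (hlamq : 0 < lam ⟨q, hqn⟩)
    (α : ℝ) (hα0 : 0 ≤ α) (hα1 : α < 1)
    (hexists : ∃ V : Fin q → Finset (Fin n),
      (∀ j, (V j).Nonempty) ∧
      (∀ j j' : Fin q, j ≠ j' → Disjoint (V j) (V j')) ∧
      (∀ i : Fin n, ∃ j : Fin q, i ∈ V j) ∧
      avgrelout A V ≤ α * lam ⟨q, hqn⟩ / Real.sqrt (2 * q)) :
    lam ⟨q - 1, Nat.lt_of_le_of_lt (Nat.sub_le q 1) hqn⟩ / lam ⟨q, hqn⟩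
      ≤ α / Real.sqrt (1 - α ^ 2) := by
  obtain ⟨V, hne, hdisj, hcover, hbound⟩ := hexists
  set lq : ℝ := lam ⟨q, hqn⟩ with hlq
  set lp : ℝ := lam ⟨q - 1, Nat.lt_of_le_of_lt (Nat.sub_le q 1) hqn⟩ with hlp
  -- main claim : lp ≤ α * lq
  have main : lp ≤ α * lq := by
    -- cardinalities
    set c : Fin q → ℝ := fun j => ((V j).card : ℝ) with hc
    have hc1 : ∀ j, 1 ≤ c j := by
      intro j
      have := Nat.succ_le_of_lt (Finset.card_pos.mpr (hne j))
      simp only [hc]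
      exact_mod_cast this
    have hc0 : ∀ j, 0 < c j := fun j => lt_of_lt_of_le one_pos (hc1 j)
    -- indicator vectors
    set χ : Fin q → Fin n → ℝ :=
      fun j k => if k ∈ V j then (Real.sqrt (c j))⁻¹ else 0 with hχ
    -- cut weights
    set cut : Fin q → ℝ := fun j => ∑ k ∈ V j, ∑ l ∈ (V j)ᶜ, A k l with hcut
    have hcut0 : ∀ j, 0 ≤ cut j := by
      intro j
      exact Finset.sum_nonneg fun k _ => Finset.sum_nonneg fun l _ => hnonneg k l
    have hrel : ∀ j, relout A V j = (Real.sqrt (c j))⁻¹ * cut j := fun j => rfl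
    -- the quotient matrix
    set G : Fin q → Fin q → ℝ :=
      fun j j' => ∑ k, ∑ l, χ j k * lap A k l * χ j' l with hG
    -- orthonormality of χ
    have hχorth : ∀ j j', (∑ a, χ j a * χ j' a) = if j = j' then (1:ℝ) else 0 := by
      intro j j'
      rcases eq_or_ne j j' with rfl | hne'
      · rw [if_pos rfl]
        have hval : ∀ a, χ j a * χ j a
            = (if a ∈ V j then (Real.sqrt (c j))⁻¹ ^ 2 else 0) := by
          intro a; by_cases h : a ∈ V j <;> simp [hχ, h, sq]
        rw [Finset.sum_congr rfl fun a _ => hval a, Finset.sum_ite_mem, Finset.univ_inter,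
          Finset.sum_const, nsmul_eq_mul, inv_pow, Real.sq_sqrt (hc0 j).le]
        exact mul_inv_cancel₀ (hc0 j).ne'
      · rw [if_neg hne']
        apply Finset.sum_eq_zero
        intro a _
        by_cases h1 : a ∈ V j
        · have h2 : a ∉ V j' := fun h2 => (Finset.disjoint_left.mp (hdisj j j' hne')) h1 h2
          simp [hχ, h1, h2]
        · simp [hχ, h1]
    -- existence of w
    obtain ⟨w, hw0, hwker⟩ :
        ∃ w : Fin q → ℝ, w ≠ 0 ∧
          ∀ i : Fin n, (i : ℕ) < q - 1 → (∑ a, u i a * (∑ j, w j * χ j a)) = 0 := by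
      have hq1n : q - 1 < n := Nat.lt_of_le_of_lt (Nat.sub_le q 1) hqn
      set M : Matrix (Fin (q-1)) (Fin q) ℝ :=
        fun i j => ∑ a, u ⟨i.1, lt_trans i.2 hq1n⟩ a * χ j a with hM
      have hker : LinearMap.ker (Matrix.mulVecLin M) ≠ ⊥ := by
        intro h
        have hinj : Function.Injective (Matrix.mulVecLin M) := LinearMap.ker_eq_bot.mp h
        have hle := LinearMap.finrank_le_finrank_of_injective hinj
        rw [Module.finrank_fin_fun, Module.finrank_fin_fun] at hle
        omega
      obtain ⟨w, hwmem, hw0⟩ := (Submodule.ne_bot_iff _).mp hker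
      refine ⟨w, hw0, ?_⟩
      intro i hi
      have hmem : M.mulVec w = 0 := hwmem
      have hzero := congrFun hmem ⟨i.1, hi⟩
      simp only [Matrix.mulVec, dotProduct, Pi.zero_apply] at hzero
      have hieq : (⟨(⟨i.1, hi⟩ : Fin (q-1)).1, lt_trans (⟨i.1, hi⟩ : Fin (q-1)).2 hq1n⟩ : Fin n) = i :=
        Fin.ext rfl
      calc (∑ a, u i a * (∑ j, w j * χ j a))
          = ∑ a, ∑ j, u i a * χ j a * w j := by
            refine Finset.sum_congr rfl fun a _ => ?_
            rw [Finset.mul_sum]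
            exact Finset.sum_congr rfl fun j _ => by ring
        _ = ∑ j, ∑ a, u i a * χ j a * w j := Finset.sum_comm
        _ = ∑ j, (∑ a, u i a * χ j a) * w j := by
            exact Finset.sum_congr rfl fun j _ => (Finset.sum_mul _ _ _).symm
        _ = ∑ j, M ⟨i.1, hi⟩ j * w j := by
            refine Finset.sum_congr rfl fun j _ => ?_
            simp only [hM, hieq]
        _ = 0 := hzero
    set x : Fin n → ℝ := fun a => ∑ j, w j * χ j a with hx
    set W2 : ℝ := ∑ j, w j ^ 2 with hW2
    have hW2pos : 0 < W2 := by
      obtain ⟨j0, hj0⟩ := Function.ne_iff.mp hw0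
      refine Finset.sum_pos' (fun j _ => sq_nonneg _) ⟨j0, Finset.mem_univ _, ?_⟩
      exact lt_of_le_of_ne (sq_nonneg _) (Ne.symm (pow_ne_zero _ hj0))
    -- norm of x
    have hxnorm : (∑ a, x a ^ 2) = W2 := by
      calc ∑ a, x a ^ 2
          = ∑ a, ∑ j, ∑ j', (w j * w j') * (χ j a * χ j' a) := by
            refine Finset.sum_congr rfl fun a _ => ?_
            rw [sq, hx, Finset.sum_mul_sum]
            exact Finset.sum_congr rfl fun j _ =>
              Finset.sum_congr rfl fun j' _ => by ring
        _ = ∑ j, ∑ a, ∑ j', (w j * w j') * (χ j a * χ j' a) := Finset.sum_comm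
        _ = ∑ j, ∑ j', ∑ a, (w j * w j') * (χ j a * χ j' a) := by
            exact Finset.sum_congr rfl fun j _ => Finset.sum_comm
        _ = ∑ j, ∑ j', (w j * w j') * (∑ a, χ j a * χ j' a) := by
            exact Finset.sum_congr rfl fun j _ =>
              Finset.sum_congr rfl fun j' _ => (Finset.mul_sum _ _ _).symm
        _ = ∑ j, ∑ j', if j = j' then w j * w j' else 0 := by
            refine Finset.sum_congr rfl fun j _ => Finset.sum_congr rfl fun j' _ => ?_
            rw [hχorth j j']; split_ifs <;> ring
        _ = W2 := by
            rw [hW2]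
            refine Finset.sum_congr rfl fun j _ => ?_
            rw [Finset.sum_ite_eq, if_pos (Finset.mem_univ j), sq]
    -- spectral decomposition of the quadratic form
    set y : Fin n → ℝ := fun i => ∑ a, u i a * x a with hy
    have hyO : ∀ i : Fin n, (i : ℕ) < q - 1 → y i = 0 := fun i hi => hwker i hi
    have hU2 : ∀ a b : Fin n, (∑ i, u i a * u i b) = if a = b then (1:ℝ) else 0 := by
      have h1 : (Matrix.of u) * (Matrix.of u)ᵀ = 1 := by
        ext i j
        simpa [Matrix.mul_apply, Matrix.one_apply] using horth i j
      have h2 := mul_eq_one_comm.mp h1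
      intro a b
      have h3 := congrFun (congrFun h2 a) b
      simpa [Matrix.mul_apply, Matrix.one_apply] using h3
    have hParseval : (∑ i, y i ^ 2) = ∑ a, x a ^ 2 := by
      calc ∑ i, y i ^ 2
          = ∑ i, ∑ a, ∑ b, (x a * x b) * (u i a * u i b) := by
            refine Finset.sum_congr rfl fun i _ => ?_
            rw [sq, hy, Finset.sum_mul_sum]
            exact Finset.sum_congr rfl fun a _ =>
              Finset.sum_congr rfl fun b _ => by ring
        _ = ∑ a, ∑ i, ∑ b, (x a * x b) * (u i a * u i b) := Finset.sum_comm
        _ = ∑ a, ∑ b, ∑ i, (x a * x b) * (u i a * u i b) := by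
            exact Finset.sum_congr rfl fun a _ => Finset.sum_comm
        _ = ∑ a, ∑ b, (x a * x b) * (∑ i, u i a * u i b) := by
            exact Finset.sum_congr rfl fun a _ =>
              Finset.sum_congr rfl fun b _ => (Finset.mul_sum _ _ _).symm
        _ = ∑ a, ∑ b, if a = b then x a * x b else 0 := by
            refine Finset.sum_congr rfl fun a _ => Finset.sum_congr rfl fun b _ => ?_
            rw [hU2 a b]; split_ifs <;> ring
        _ = ∑ a, x a ^ 2 := by
            refine Finset.sum_congr rfl fun a _ => ?_
            rw [Finset.sum_ite_eq, if_pos (Finset.mem_univ a), sq]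
    have hxdec : ∀ a, x a = ∑ i, y i * u i a := by
      intro a
      calc x a = ∑ b, if b = a then x b else 0 := by
            rw [Finset.sum_ite_eq', if_pos (Finset.mem_univ a)]
        _ = ∑ b, ∑ i, (x b) * (u i b * u i a) := by
            refine Finset.sum_congr rfl fun b _ => ?_
            rw [← Finset.mul_sum, hU2 b a]
            split_ifs <;> ring
        _ = ∑ i, ∑ b, (x b) * (u i b * u i a) := Finset.sum_comm
        _ = ∑ i, y i * u i a := by
            refine Finset.sum_congr rfl fun i _ => ?_
            rw [hy]
            rw [Finset.sum_mul]
            exact Finset.sum_congr rfl fun b _ => by ring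
    have hLu : ∀ (i : Fin n) (k : Fin n), (∑ l, lap A k l * u i l) = lam i * u i k := by
      intro i k
      have := congrFun (heig i) k
      simpa [Matrix.mulVec, dotProduct] using this
    have hQF : (∑ k, ∑ l, x k * lap A k l * x l) = ∑ i, lam i * y i ^ 2 := by
      calc ∑ k, ∑ l, x k * lap A k l * x l
          = ∑ k, x k * (∑ l, lap A k l * x l) := by
            refine Finset.sum_congr rfl fun k _ => ?_
            rw [Finset.mul_sum]
            exact Finset.sum_congr rfl fun l _ => by ring
        _ = ∑ k, x k * (∑ i, lam i * y i * u i k) := by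
            refine Finset.sum_congr rfl fun k _ => ?_
            congr 1
            calc ∑ l, lap A k l * x l
                = ∑ l, ∑ i, y i * (lap A k l * u i l) := by
                  refine Finset.sum_congr rfl fun l _ => ?_
                  rw [hxdec l, Finset.mul_sum]
                  exact Finset.sum_congr rfl fun i _ => by ring
              _ = ∑ i, ∑ l, y i * (lap A k l * u i l) := Finset.sum_comm
              _ = ∑ i, y i * (∑ l, lap A k l * u i l) := by
                  exact Finset.sum_congr rfl fun i _ => (Finset.mul_sum _ _ _).symm
              _ = ∑ i, lam i * y i * u i k := by
                  refine Finset.sum_congr rfl fun i _ => ?_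
                  rw [hLu i k]; ring
        _ = ∑ k, ∑ i, (lam i * y i) * (u i k * x k) := by
            refine Finset.sum_congr rfl fun k _ => ?_
            rw [Finset.mul_sum]
            exact Finset.sum_congr rfl fun i _ => by ring
        _ = ∑ i, ∑ k, (lam i * y i) * (u i k * x k) := Finset.sum_comm
        _ = ∑ i, lam i * y i ^ 2 := by
            refine Finset.sum_congr rfl fun i _ => ?_
            rw [← Finset.mul_sum]
            have hyi : (∑ k, u i k * x k) = y i := rfl
            rw [hyi]; ring
    -- lower bound
    have hlow : lp * W2 ≤ ∑ i, lam i * y i ^ 2 := by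
      have hW2y : W2 = ∑ i, y i ^ 2 := by rw [hParseval, hxnorm]
      rw [hW2y, Finset.mul_sum]
      apply Finset.sum_le_sum
      intro i _
      by_cases hi : (i : ℕ) < q - 1
      · rw [hyO i hi]; simp
      · have hle : lp ≤ lam i := by
          rw [hlp]
          exact hmono (by simpa [Fin.le_def] using Nat.le_of_not_lt hi)
        exact mul_le_mul_of_nonneg_right hle (sq_nonneg _)
    -- expansion in terms of G
    have hexp : (∑ k, ∑ l, x k * lap A k l * x l) = ∑ j, ∑ j', (w j * w j') * G j j' := by
      calc ∑ k, ∑ l, x k * lap A k l * x l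
          = ∑ k, ∑ l, ∑ j, ∑ j', (w j * w j') * (χ j k * lap A k l * χ j' l) := by
            refine Finset.sum_congr rfl fun k _ => Finset.sum_congr rfl fun l _ => ?_
            rw [hx]
            rw [Finset.sum_mul, Finset.sum_mul]
            refine Finset.sum_congr rfl fun j _ => ?_
            rw [Finset.mul_sum]
            exact Finset.sum_congr rfl fun j' _ => by ring
        _ = ∑ k, ∑ j, ∑ l, ∑ j', (w j * w j') * (χ j k * lap A k l * χ j' l) := by
            exact Finset.sum_congr rfl fun k _ => Finset.sum_comm
        _ = ∑ j, ∑ k, ∑ l, ∑ j', (w j * w j') * (χ j k * lap A k l * χ j' l) :=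
            Finset.sum_comm
        _ = ∑ j, ∑ k, ∑ j', ∑ l, (w j * w j') * (χ j k * lap A k l * χ j' l) := by
            exact Finset.sum_congr rfl fun j _ =>
              Finset.sum_congr rfl fun k _ => Finset.sum_comm
        _ = ∑ j, ∑ j', ∑ k, ∑ l, (w j * w j') * (χ j k * lap A k l * χ j' l) := by
            exact Finset.sum_congr rfl fun j _ => Finset.sum_comm
        _ = ∑ j, ∑ j', (w j * w j') * G j j' := by
            refine Finset.sum_congr rfl fun j _ => Finset.sum_congr rfl fun j' _ => ?_
            rw [hG, Finset.mul_sum]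
            exact Finset.sum_congr rfl fun k _ => (Finset.mul_sum _ _ _).symm
    -- Frobenius bound
    set S : ℝ := ∑ j, (relout A V j) ^ 2 with hS
    have hS0 : 0 ≤ S := Finset.sum_nonneg fun j _ => sq_nonneg _
    have hsupp : ∀ (j : Fin q) (f : Fin n → ℝ),
        (∑ k, χ j k * f k) = (Real.sqrt (c j))⁻¹ * ∑ k ∈ V j, f k := by
      intro j f
      calc ∑ k, χ j k * f k
          = ∑ k, (if k ∈ V j then (Real.sqrt (c j))⁻¹ * f k else 0) := by
            refine Finset.sum_congr rfl fun k _ => ?_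
            simp only [hχ]
            split_ifs <;> ring
        _ = ∑ k ∈ V j, (Real.sqrt (c j))⁻¹ * f k := by
            rw [Finset.sum_ite_mem, Finset.univ_inter]
        _ = (Real.sqrt (c j))⁻¹ * ∑ k ∈ V j, f k := (Finset.mul_sum _ _ _).symm
    have hGB : ∀ j j', G j j' = (Real.sqrt (c j))⁻¹ * ((Real.sqrt (c j'))⁻¹ *
        ∑ k ∈ V j, ∑ l ∈ V j', lap A k l) := by
      intro j j'
      calc G j j'
          = ∑ k, χ j k * (∑ l, χ j' l * lap A k l) := by
            rw [hG]
            refine Finset.sum_congr rfl fun k _ => ?_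
            rw [Finset.mul_sum]
            exact Finset.sum_congr rfl fun l _ => by ring
        _ = ∑ k, χ j k * ((Real.sqrt (c j'))⁻¹ * ∑ l ∈ V j', lap A k l) := by
            exact Finset.sum_congr rfl fun k _ => by rw [hsupp j' _]
        _ = (Real.sqrt (c j))⁻¹ * ∑ k ∈ V j, ((Real.sqrt (c j'))⁻¹ * ∑ l ∈ V j', lap A k l) :=
            hsupp j _
        _ = (Real.sqrt (c j))⁻¹ * ((Real.sqrt (c j'))⁻¹ * ∑ k ∈ V j, ∑ l ∈ V j', lap A k l) := by
            rw [← Finset.mul_sum]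
    have hlapent : ∀ k l, lap A k l = (if k = l then (∑ m, A k m) else 0) - A k l := by
      intro k l
      simp [lap, degMat, Matrix.sub_apply, Matrix.diagonal_apply]
    have hBdiag : ∀ j, (∑ k ∈ V j, ∑ l ∈ V j, lap A k l) = cut j := by
      intro j
      refine Finset.sum_congr rfl fun k hk => ?_
      calc ∑ l ∈ V j, lap A k l
          = ∑ l ∈ V j, ((if k = l then (∑ m, A k m) else 0) - A k l) :=
            Finset.sum_congr rfl fun l _ => hlapent k l
        _ = (∑ l ∈ V j, (if k = l then (∑ m, A k m) else 0)) - ∑ l ∈ V j, A k l :=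
            Finset.sum_sub_distrib _ _
        _ = (∑ m, A k m) - ∑ l ∈ V j, A k l := by
            rw [Finset.sum_ite_eq (V j) k, if_pos hk]
        _ = ∑ l ∈ (V j)ᶜ, A k l := by
            rw [← Finset.sum_add_sum_compl (V j) (A k)]; ring
    set Wt : Fin q → Fin q → ℝ := fun j j' => ∑ k ∈ V j, ∑ l ∈ V j', A k l with hWt
    have hWt0 : ∀ j j', 0 ≤ Wt j j' := fun j j' =>
      Finset.sum_nonneg fun k _ => Finset.sum_nonneg fun l _ => hnonneg k l
    have hBoff : ∀ j j', j ≠ j' → (∑ k ∈ V j, ∑ l ∈ V j', lap A k l) = -(Wt j j') := by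
      intro j j' hjj
      have hstep : ∀ k ∈ V j, (∑ l ∈ V j', lap A k l) = -(∑ l ∈ V j', A k l) := by
        intro k hk
        have hk' : k ∉ V j' := fun h => Finset.disjoint_left.mp (hdisj j j' hjj) hk h
        calc ∑ l ∈ V j', lap A k l
            = (∑ l ∈ V j', (if k = l then (∑ m, A k m) else 0)) - ∑ l ∈ V j', A k l := by
              rw [← Finset.sum_sub_distrib]
              exact Finset.sum_congr rfl fun l _ => hlapent k l
          _ = -(∑ l ∈ V j', A k l) := by
              rw [Finset.sum_ite_eq (V j') k, if_neg hk']; ring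
      rw [Finset.sum_congr rfl hstep, hWt, Finset.sum_neg_distrib]
    have hcompl : ∀ j, (V j)ᶜ = (Finset.univ.erase j).biUnion V := by
      intro j; ext l
      simp only [Finset.mem_compl, Finset.mem_biUnion, Finset.mem_erase, Finset.mem_univ,
        true_and, and_true]
      constructor
      · intro hl
        obtain ⟨j', hj'⟩ := hcover l
        exact ⟨j', fun h => hl (h ▸ hj'), hj'⟩
      · rintro ⟨j', hne', hl⟩ h
        exact Finset.disjoint_left.mp (hdisj j' j hne') hl h
    have hcutW : ∀ j, cut j = ∑ j' ∈ Finset.univ.erase j, Wt j j' := by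
      intro j
      calc cut j
          = ∑ k ∈ V j, ∑ j' ∈ Finset.univ.erase j, ∑ l ∈ V j', A k l := by
            refine Finset.sum_congr rfl fun k _ => ?_
            rw [hcompl j]
            exact Finset.sum_biUnion fun a _ b _ hab => hdisj a b hab
        _ = ∑ j' ∈ Finset.univ.erase j, Wt j j' := Finset.sum_comm
    have hrow : ∀ j, (∑ j', G j j' ^ 2) ≤ 2 * (relout A V j) ^ 2 := by
      intro j
      have hs1 : 1 ≤ Real.sqrt (c j) := by
        rw [show (1:ℝ) = Real.sqrt 1 by simp]
        exact Real.sqrt_le_sqrt (hc1 j)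
      have hsinv : (Real.sqrt (c j))⁻¹ ≤ 1 := inv_le_one_of_one_le₀ hs1
      have hsinv0 : 0 ≤ (Real.sqrt (c j))⁻¹ := inv_nonneg.mpr (Real.sqrt_nonneg _)
      have hreloutsq : (relout A V j) ^ 2 = ((Real.sqrt (c j))⁻¹) ^ 2 * (cut j) ^ 2 := by
        rw [hrel j, mul_pow]
      -- diagonal term
      have hGd2 : G j j ^ 2 ≤ (relout A V j) ^ 2 := by
        rw [hGB j j, hBdiag j, hreloutsq]
        have : ((Real.sqrt (c j))⁻¹ * ((Real.sqrt (c j))⁻¹ * cut j)) ^ 2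
            = ((Real.sqrt (c j))⁻¹)^2 * (((Real.sqrt (c j))⁻¹)^2 * (cut j)^2) := by ring
        rw [this]
        have h1 : ((Real.sqrt (c j))⁻¹)^2 ≤ 1 := pow_le_one₀ hsinv0 hsinv
        nlinarith [sq_nonneg ((Real.sqrt (c j))⁻¹), sq_nonneg (cut j),
          mul_nonneg (sq_nonneg ((Real.sqrt (c j))⁻¹)) (sq_nonneg (cut j))]
      -- off-diagonal terms
      have hoff : (∑ j' ∈ Finset.univ.erase j, G j j' ^ 2) ≤ (relout A V j) ^ 2 := by
        have hterm : ∀ j' ∈ Finset.univ.erase j,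
            G j j' ^ 2 ≤ ((Real.sqrt (c j))⁻¹)^2 * (Wt j j') ^ 2 := by
          intro j' hj'
          have hjj : j ≠ j' := fun h => (Finset.mem_erase.mp hj').1 h.symm
          rw [hGB j j', hBoff j j' hjj]
          have hexpand : ((Real.sqrt (c j))⁻¹ * ((Real.sqrt (c j'))⁻¹ * -(Wt j j'))) ^ 2
              = ((Real.sqrt (c j))⁻¹)^2 * (((Real.sqrt (c j'))⁻¹)^2 * (Wt j j')^2) := by ring
          rw [hexpand]
          have hs1' : 1 ≤ Real.sqrt (c j') := by
            rw [show (1:ℝ) = Real.sqrt 1 by simp]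
            exact Real.sqrt_le_sqrt (hc1 j')
          have h1 : ((Real.sqrt (c j'))⁻¹)^2 ≤ 1 :=
            pow_le_one₀ (inv_nonneg.mpr (Real.sqrt_nonneg _)) (inv_le_one_of_one_le₀ hs1')
          nlinarith [sq_nonneg ((Real.sqrt (c j))⁻¹), sq_nonneg (Wt j j'),
            mul_nonneg (sq_nonneg ((Real.sqrt (c j))⁻¹)) (sq_nonneg (Wt j j'))]
        have hWt2 : (∑ j' ∈ Finset.univ.erase j, (Wt j j') ^ 2) ≤ (cut j) ^ 2 := by
          have hle : ∀ j' ∈ Finset.univ.erase j, (Wt j j') ^ 2 ≤ Wt j j' * cut j := by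
            intro j' hj'
            have h1 : Wt j j' ≤ cut j := by
              rw [hcutW j]
              exact Finset.single_le_sum (fun a _ => hWt0 j a) hj'
            rw [sq]
            exact mul_le_mul_of_nonneg_left h1 (hWt0 j j')
          calc (∑ j' ∈ Finset.univ.erase j, (Wt j j') ^ 2)
              ≤ ∑ j' ∈ Finset.univ.erase j, Wt j j' * cut j := Finset.sum_le_sum hle
            _ = (∑ j' ∈ Finset.univ.erase j, Wt j j') * cut j := (Finset.sum_mul _ _ _).symm
            _ = (cut j) ^ 2 := by rw [← hcutW j, sq]
        calc (∑ j' ∈ Finset.univ.erase j, G j j' ^ 2)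
            ≤ ∑ j' ∈ Finset.univ.erase j, ((Real.sqrt (c j))⁻¹)^2 * (Wt j j') ^ 2 :=
              Finset.sum_le_sum hterm
          _ = ((Real.sqrt (c j))⁻¹)^2 * ∑ j' ∈ Finset.univ.erase j, (Wt j j') ^ 2 :=
              (Finset.mul_sum _ _ _).symm
          _ ≤ ((Real.sqrt (c j))⁻¹)^2 * (cut j) ^ 2 :=
              mul_le_mul_of_nonneg_left hWt2 (sq_nonneg _)
          _ = (relout A V j) ^ 2 := hreloutsq.symm
      calc (∑ j', G j j' ^ 2)
          = (∑ j' ∈ Finset.univ.erase j, G j j' ^ 2) + G j j ^ 2 :=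
            (Finset.sum_erase_add _ _ (Finset.mem_univ j)).symm
        _ ≤ (relout A V j) ^ 2 + (relout A V j) ^ 2 := add_le_add hoff hGd2
        _ = 2 * (relout A V j) ^ 2 := by ring
    have hF2 : (∑ j, ∑ j', G j j' ^ 2) ≤ 2 * S := by
      rw [hS, Finset.mul_sum]
      exact Finset.sum_le_sum fun j _ => hrow j
    -- Cauchy–Schwarz
    have hCS : (∑ j, ∑ j', (w j * w j') * G j j')
        ≤ W2 * Real.sqrt (∑ j, ∑ j', G j j' ^ 2) := by
      have h1 : (∑ j, ∑ j', (w j * w j') * G j j')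
          = ∑ p : Fin q × Fin q, (w p.1 * w p.2) * G p.1 p.2 :=
        (Finset.sum_product' _ _ _).symm.trans (by rw [Finset.univ_product_univ])
      have h2 : (∑ j, ∑ j', G j j' ^ 2) = ∑ p : Fin q × Fin q, (G p.1 p.2) ^ 2 :=
        (Finset.sum_product' _ _ _).symm.trans (by rw [Finset.univ_product_univ])
      have h3 : (∑ p : Fin q × Fin q, (w p.1 * w p.2) ^ 2) = W2 ^ 2 := by
        calc ∑ p : Fin q × Fin q, (w p.1 * w p.2) ^ 2
            = ∑ j, ∑ j', (w j) ^ 2 * (w j') ^ 2 := by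
              rw [← Finset.univ_product_univ, Finset.sum_product]
              exact Finset.sum_congr rfl fun j _ =>
                Finset.sum_congr rfl fun j' _ => by ring
          _ = W2 ^ 2 := by rw [← Finset.sum_mul_sum, hW2, sq]
      have hkey := Finset.sum_mul_sq_le_sq_mul_sq (Finset.univ : Finset (Fin q × Fin q))
        (fun p => w p.1 * w p.2) (fun p => G p.1 p.2)
      rw [h3] at hkey
      calc (∑ j, ∑ j', (w j * w j') * G j j')
          ≤ |∑ j, ∑ j', (w j * w j') * G j j'| := le_abs_self _
        _ = Real.sqrt ((∑ j, ∑ j', (w j * w j') * G j j') ^ 2) :=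
            (Real.sqrt_sq_eq_abs _).symm
        _ ≤ Real.sqrt (W2 ^ 2 * (∑ j, ∑ j', G j j' ^ 2)) := by
            apply Real.sqrt_le_sqrt
            rw [h1, h2]
            exact hkey
        _ = W2 * Real.sqrt (∑ j, ∑ j', G j j' ^ 2) := by
            rw [Real.sqrt_mul (sq_nonneg _), Real.sqrt_sq hW2pos.le]
    -- bound on S
    have hSb : 2 * S ≤ (α * lq) ^ 2 := by
      have hq0 : (0:ℝ) < (q:ℝ) := by exact_mod_cast Nat.lt_of_lt_of_le Nat.zero_lt_one hq1
      have h2q : (0:ℝ) < 2 * q := by linarith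
      have hrhs0 : 0 ≤ α * lq / Real.sqrt (2 * q) :=
        div_nonneg (mul_nonneg hα0 hlamq.le) (Real.sqrt_nonneg _)
      have hbound' : Real.sqrt ((1 / (q:ℝ)) * S) ≤ α * lq / Real.sqrt (2 * q) := by
        have : avgrelout A V = Real.sqrt ((1 / (q:ℝ)) * S) := by
          rw [avgrelout, hS]
        rw [← this]
        exact hbound
      have h1 : (1 / (q:ℝ)) * S ≤ (α * lq / Real.sqrt (2 * q)) ^ 2 :=
        (Real.sqrt_le_left hrhs0).mp hbound'
      have h2 : (α * lq / Real.sqrt (2 * q)) ^ 2 = (α * lq) ^ 2 / (2 * q) := by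
        rw [div_pow, Real.sq_sqrt h2q.le]
      rw [h2] at h1
      have h3 := mul_le_mul_of_nonneg_left h1 hq0.le
      rw [← mul_assoc, mul_one_div, div_self hq0.ne', one_mul] at h3
      have h4 : (q:ℝ) * ((α * lq) ^ 2 / (2 * q)) = (α * lq) ^ 2 / 2 := by
        field_simp
      rw [h4] at h3
      linarith
    have hsqrt : Real.sqrt (∑ j, ∑ j', G j j' ^ 2) ≤ α * lq := by
      have h1 : (∑ j, ∑ j', G j j' ^ 2) ≤ (α * lq) ^ 2 := le_trans hF2 hSb
      have h2 : 0 ≤ α * lq := mul_nonneg hα0 (le_of_lt hlamq)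
      exact (Real.sqrt_le_left h2).mpr h1
    -- assemble
    have : lp * W2 ≤ (α * lq) * W2 := by
      calc lp * W2 ≤ ∑ i, lam i * y i ^ 2 := hlow
        _ = ∑ k, ∑ l, x k * lap A k l * x l := hQF.symm
        _ = ∑ j, ∑ j', (w j * w j') * G j j' := hexp
        _ ≤ W2 * Real.sqrt (∑ j, ∑ j', G j j' ^ 2) := hCS
        _ ≤ W2 * (α * lq) := by
            exact mul_le_mul_of_nonneg_left hsqrt (le_of_lt hW2pos)
        _ = (α * lq) * W2 := mul_comm _ _
    exact le_of_mul_le_mul_right this hW2pos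
  -- finish : lp/lq ≤ α ≤ α/√(1-α²)
  have h1 : lp / lq ≤ α := by
    rw [div_le_iff₀ hlamq]
    exact main
  have hpos : 0 < 1 - α ^ 2 := by nlinarith
  have hs1 : Real.sqrt (1 - α ^ 2) ≤ 1 := Real.sqrt_le_one.mpr (by nlinarith)
  have hs0 : 0 < Real.sqrt (1 - α ^ 2) := Real.sqrt_pos.mpr hpos
  have h2 : α ≤ α / Real.sqrt (1 - α ^ 2) := by
    rw [le_div_iff₀ hs0]
    nlinarith
  exact le_trans h1 h2
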